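/- Let N ≥ 1 and let G : ℝ → ℝ be continuous with G(0) = 0, and suppose there exists ξ > 0 with G(ξ) > 0. Then there exists a Lipschitz continuous function u : EuclideanSpace ℝ (Fin N) → ℝ with compact support, with 0 ≤ u(x) ≤ ξ for all x, such that G∘u is integrable and ∫_{ℝ^N} G(u(x)) dx > 0. -/

import Mathlib

open MeasureTheory Metric

/-- Nonemptiness of the Pohozaev manifold: if `G` is continuous, `G 0 = 0` and
`G ξ > 0` for some `ξ > 0`, then there is a Lipschitz compactly supported function
`u` with values in `[0, ξ]` such that `G ∘ u` is integrable and `∫ G(u) > 0`. -/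
theorem exists_bump_with_positive_G {N : ℕ} (hN : 1 ≤ N)
    (G : ℝ → ℝ) (hG : Continuous G) (hG0 : G 0 = 0)
    (ξ : ℝ) (hξ : 0 < ξ) (hGξ : 0 < G ξ) :
    ∃ u : EuclideanSpace ℝ (Fin N) → ℝ,
      (∃ K : NNReal, LipschitzWith K u) ∧
      HasCompactSupport u ∧
      (∀ x, 0 ≤ u x ∧ u x ≤ ξ) ∧
      Integrable (fun x => G (u x)) ∧
      0 < ∫ x, G (u x) := by
  set E := EuclideanSpace ℝ (Fin N)
  -- bound on G over [0, ξ]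
  obtain ⟨C, hC⟩ := (isCompact_Icc : IsCompact (Set.Icc (0:ℝ) ξ)).exists_bound_of_continuousOn
    hG.continuousOn
  set M : ℝ := max C 1 with hM
  have hMpos : 0 < M := lt_of_lt_of_le one_pos (le_max_right _ _)
  have hMb : ∀ t ∈ Set.Icc (0:ℝ) ξ, ‖G t‖ ≤ M := fun t ht => (hC t ht).trans (le_max_left _ _)
  set ε : ℝ := G ξ / (2 * M) with hε
  have hεpos : 0 < ε := div_pos hGξ (by positivity)
  -- choose δ small so that (1+δ)^N < 1 + ε
  have hcont : Filter.Tendsto (fun d : ℝ => (1 + d) ^ N) (nhds 0) (nhds 1) := by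
    have h : Continuous (fun d : ℝ => (1 + d) ^ N) := by continuity
    simpa using h.tendsto 0
  have hev : ∀ᶠ d in nhds (0:ℝ), (1 + d) ^ N < 1 + ε :=
    hcont.eventually (eventually_lt_nhds (by linarith))
  obtain ⟨δ', hδ'pos, hδ'⟩ := Metric.eventually_nhds_iff.mp hev
  set δ : ℝ := δ' / 2 with hδdef
  have hδpos : 0 < δ := by positivity
  have hδlt : (1 + δ) ^ N < 1 + ε := by
    refine hδ' ?_
    rw [Real.dist_eq, sub_zero, abs_of_pos hδpos]
    simp only [hδdef]
    linarith
  set R : ℝ := 1 + δ with hRdef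
  have hR1 : 1 < R := by simp only [hRdef]; linarith
  have hR0 : 0 < R := by linarith
  -- the bump function
  set u : E → ℝ := fun x => ξ * min 1 (max 0 ((R - ‖x‖) / δ)) with hu
  have hu01 : ∀ x, 0 ≤ u x ∧ u x ≤ ξ := by
    intro x
    have h0 : (0:ℝ) ≤ min 1 (max 0 ((R - ‖x‖) / δ)) := le_min one_pos.le (le_max_left _ _)
    have h1 : min 1 (max 0 ((R - ‖x‖) / δ)) ≤ 1 := min_le_left _ _
    constructor
    · exact mul_nonneg hξ.le h0
    · calc u x ≤ ξ * 1 := by exact mul_le_mul_of_nonneg_left h1 hξ.le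
        _ = ξ := mul_one ξ
  have hball : ∀ x ∈ ball (0:E) 1, u x = ξ := by
    intro x hx
    have hx1 : ‖x‖ < 1 := by simpa [mem_ball, dist_eq_norm] using hx
    have h1 : (1:ℝ) ≤ (R - ‖x‖) / δ := by
      rw [le_div_iff₀ hδpos]
      simp only [hRdef]
      linarith
    have hmax : max 0 ((R - ‖x‖) / δ) = (R - ‖x‖) / δ :=
      max_eq_right (le_trans zero_le_one h1)
    simp [hu, hmax, min_eq_left h1]
  have hzero : ∀ x : E, R ≤ ‖x‖ → u x = 0 := by
    intro x hx
    have h1 : (R - ‖x‖) / δ ≤ 0 := div_nonpos_of_nonpos_of_nonneg (by linarith) hδpos.le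
    simp [hu, max_eq_left h1]
  -- Lipschitz
  have l1 : LipschitzWith 1 (fun t : ℝ => R - t) :=
    LipschitzWith.of_dist_le_mul fun x y => by rw [dist_sub_left]; simp
  have l2 : LipschitzWith (‖(δ⁻¹:ℝ)‖₊ * 1) (fun t : ℝ => (R - t) / δ) := by
    have := (lipschitzWith_smul (δ⁻¹ : ℝ)).comp l1
    simpa [div_eq_inv_mul, Function.comp_def] using this
  have l3 := (LipschitzWith.const' (0:ℝ) (K := 0)).max l2
  have l4 := (LipschitzWith.const' (1:ℝ) (K := 0)).min l3
  have l5 := (lipschitzWith_smul (ξ : ℝ)).comp l4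
  have h6 := l5.comp (lipschitzWith_one_norm : LipschitzWith 1 (norm : E → ℝ))
  have lipu : ∃ K : NNReal, LipschitzWith K u :=
    ⟨_, by simpa [hu, Function.comp_def, smul_eq_mul] using h6⟩
  have ucont : Continuous u := lipu.choose_spec.continuous
  -- compact support
  have hsupp : HasCompactSupport u := by
    refine HasCompactSupport.intro (isCompact_closedBall (0:E) R) fun x hx => ?_
    refine hzero x ?_
    have : R < dist x 0 := lt_of_not_ge fun h => hx (mem_closedBall.2 h)
    rw [dist_zero_right] at this
    exact this.le
  have hfc : HasCompactSupport (fun x => G (u x)) := by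
    have := hsupp.comp_left (g := G) hG0
    simpa [Function.comp_def] using this
  have hint : Integrable (fun x => G (u x)) :=
    (hG.comp ucont).integrable_of_hasCompactSupport hfc
  refine ⟨u, lipu, hsupp, hu01, hint, ?_⟩
  -- measure computations
  have hdim : Module.finrank ℝ E = N := finrank_euclideanSpace_fin
  set v1 : ENNReal := volume (ball (0:E) 1) with hv1
  have v1pos : 0 < v1 := measure_ball_pos volume 0 one_pos
  have v1fin : v1 < ⊤ := measure_ball_lt_top
  set v1r : ℝ := v1.toReal with hv1r
  have v1rpos : 0 < v1r := ENNReal.toReal_pos v1pos.ne' v1fin.ne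
  have hvol_closed : volume (closedBall (0:E) R) = ENNReal.ofReal (R ^ N) * v1 := by
    rw [Measure.addHaar_closedBall volume (0:E) hR0.le, hdim]
  set S : Set E := closedBall (0:E) R \ ball (0:E) 1 with hS
  have hsub : ball (0:E) 1 ⊆ closedBall (0:E) R :=
    ball_subset_closedBall.trans (closedBall_subset_closedBall hR1.le)
  have hRN1 : (1:ℝ) ≤ R ^ N := one_le_pow₀ hR1.le
  have hSmeas : volume S = ENNReal.ofReal (R ^ N) * v1 - v1 := by
    rw [hS, measure_diff hsub measurableSet_ball.nullMeasurableSet v1fin.ne, hvol_closed]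
  have hμS : (volume S).toReal = (R ^ N - 1) * v1r := by
    rw [hSmeas, ENNReal.toReal_sub_of_le ?_ (ENNReal.mul_ne_top ENNReal.ofReal_ne_top v1fin.ne)]
    · rw [ENNReal.toReal_mul, ENNReal.toReal_ofReal (by positivity)]
      ring
    · exact le_mul_of_one_le_left zero_le (ENNReal.one_le_ofReal.2 hRN1)
  have hSfin : volume S < ⊤ := by
    rw [hSmeas]
    exact lt_of_le_of_lt (tsub_le_self.trans le_rfl)
      (ENNReal.mul_lt_top ENNReal.ofReal_lt_top v1fin)
  -- split the integral
  have hsplit : (∫ x in ball (0:E) 1, G (u x)) + (∫ x in (ball (0:E) 1)ᶜ, G (u x))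
      = ∫ x, G (u x) := integral_add_compl measurableSet_ball hint
  have h1 : (∫ x in ball (0:E) 1, G (u x)) = v1r * G ξ := by
    rw [setIntegral_congr_fun measurableSet_ball (g := fun _ => G ξ)
      (fun x hx => by rw [hball x hx]), setIntegral_const]
    simp [hv1r, smul_eq_mul]
    exact Or.inl rfl
  have h2 : (∫ x in (ball (0:E) 1)ᶜ, G (u x)) = ∫ x in S, G (u x) := by
    refine setIntegral_eq_of_subset_of_forall_diff_eq_zero measurableSet_ball.compl
      (fun x hx => hx.2) fun x hx => ?_
    have hxR : R ≤ ‖x‖ := by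
      by_contra h
      push_neg at h
      exact hx.2 ⟨mem_closedBall.2 (by rw [dist_zero_right]; linarith), hx.1⟩
    rw [hzero x hxR, hG0]
  have h3 : ‖∫ x in S, G (u x)‖ ≤ M * (volume S).toReal := by
    exact norm_setIntegral_le_of_norm_le_const hSfin (fun x _ => hMb _ ⟨(hu01 x).1, (hu01 x).2⟩)
  have h4 : M * (R ^ N - 1) < G ξ / 2 := by
    have h5 : R ^ N - 1 < ε := by linarith
    have : M * (R ^ N - 1) < M * ε := by
      exact mul_lt_mul_of_pos_left h5 hMpos
    have hMε : M * ε = G ξ / 2 := by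
      rw [hε]; field_simp
    linarith
  have habs : -(M * (volume S).toReal) ≤ ∫ x in S, G (u x) :=
    neg_le_of_abs_le (by rwa [Real.norm_eq_abs] at h3)
  rw [← hsplit, h1, h2]
  rw [hμS] at habs
  nlinarith [mul_pos hGξ v1rpos, v1rpos, mul_lt_mul_of_pos_right h4 v1rpos]
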